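/- Let M be a real symmetric 3×3 matrix, let v ∈ ℝ³ be a unit vector with M v = λ v, and let u₁, u₂, u₃ be an orthonormal basis of ℝ³. Then Σ_{i=1}^{3} Δ_M(u_i, v) = 2 (tr(M) − 2λ). Consequently, max_{i ∈ {1,2,3}} Δ_M(u_i, v) ≥ (2/3)(tr(M) − 2 λ_max(M)), where λ_max(M) denotes the largest eigenvalue of M. -/
import Mathlib


open Matrix

/-- `Δ_M(u, v) := uᵀ (tr(M_v) I₃ − M_v) u` where `M_v := M (I₃ − 2 v vᵀ)`. -/
noncomputable def DeltaM (M : Matrix (Fin 3) (Fin 3) ℝ) (u v : Fin 3 → ℝ) : ℝ :=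
  u ⬝ᵥ ((M * (1 - (2 : ℝ) • vecMulVec v v)).trace • (1 : Matrix (Fin 3) (Fin 3) ℝ)
      - M * (1 - (2 : ℝ) • vecMulVec v v)).mulVec u

lemma quad_sum (A : Matrix (Fin 3) (Fin 3) ℝ) (u₁ u₂ u₃ : Fin 3 → ℝ)
    (h₁ : u₁ ⬝ᵥ u₁ = 1) (h₂ : u₂ ⬝ᵥ u₂ = 1) (h₃ : u₃ ⬝ᵥ u₃ = 1)
    (h₁₂ : u₁ ⬝ᵥ u₂ = 0) (h₁₃ : u₁ ⬝ᵥ u₃ = 0) (h₂₃ : u₂ ⬝ᵥ u₃ = 0) :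
    u₁ ⬝ᵥ A.mulVec u₁ + u₂ ⬝ᵥ A.mulVec u₂ + u₃ ⬝ᵥ A.mulVec u₃ = A.trace := by
  simp only [dotProduct, Fin.sum_univ_three] at h₁ h₂ h₃ h₁₂ h₁₃ h₂₃
  set U : Matrix (Fin 3) (Fin 3) ℝ := Matrix.of ![u₁, u₂, u₃] with hUdef
  have hU : U * Uᵀ = 1 := by
    ext i j
    fin_cases i <;> fin_cases j <;>
      simp only [hUdef, Matrix.mul_apply, Matrix.transpose_apply, Matrix.of_apply,
        Fin.sum_univ_three, Matrix.cons_val_zero, Matrix.cons_val_one, Matrix.head_cons,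
        Matrix.cons_val_two, Matrix.tail_cons, Matrix.one_apply, Fin.zero_eta, Fin.mk_one,
        Matrix.cons_val', Matrix.empty_val', Matrix.cons_val_fin_one] <;>
      norm_num [Fin.ext_iff] <;>
      (ring_nf; ring_nf at h₁ h₂ h₃ h₁₂ h₁₃ h₂₃; linarith)
  have hU' : Uᵀ * U = 1 := mul_eq_one_comm.mp hU
  have key : (U * A * Uᵀ).trace = A.trace := by
    rw [Matrix.trace_mul_comm, ← Matrix.mul_assoc, hU', Matrix.one_mul]
  rw [← key]
  simp only [Matrix.trace, Matrix.diag, Matrix.mul_apply, Matrix.transpose_apply,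
    Matrix.of_apply, Fin.sum_univ_three, dotProduct, mulVec, hUdef,
    Matrix.cons_val_zero, Matrix.cons_val_one, Matrix.head_cons, Matrix.cons_val_two,
    Matrix.tail_cons]
  ring


lemma DeltaM_eq (M : Matrix (Fin 3) (Fin 3) ℝ) (u v : Fin 3 → ℝ) :
    DeltaM M u v = (M * (1 - (2 : ℝ) • vecMulVec v v)).trace * (u ⬝ᵥ u)
      - u ⬝ᵥ (M * (1 - (2 : ℝ) • vecMulVec v v)).mulVec u := by
  rw [DeltaM, Matrix.sub_mulVec, dotProduct_sub, Matrix.smul_mulVec,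
    Matrix.one_mulVec, dotProduct_smul, smul_eq_mul]


/-- For a symmetric `M`, a unit eigenvector `v` with eigenvalue `λ`, and an orthonormal
basis `u₁, u₂, u₃` of `ℝ³`, `Σᵢ Δ_M(uᵢ, v) = 2(tr(M) − 2λ)`; consequently
`maxᵢ Δ_M(uᵢ, v) ≥ (2/3)(tr(M) − 2 λ_max(M))` where `λ_max(M)` is the largest
eigenvalue of `M`. -/
theorem DeltaM_sum_orthonormal
    (M : Matrix (Fin 3) (Fin 3) ℝ) (hMsym : M.IsSymm)
    (v : Fin 3 → ℝ) (lam : ℝ) (hv : v ⬝ᵥ v = 1) (hev : M.mulVec v = lam • v)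
    (u₁ u₂ u₃ : Fin 3 → ℝ)
    (h₁ : u₁ ⬝ᵥ u₁ = 1) (h₂ : u₂ ⬝ᵥ u₂ = 1) (h₃ : u₃ ⬝ᵥ u₃ = 1)
    (h₁₂ : u₁ ⬝ᵥ u₂ = 0) (h₁₃ : u₁ ⬝ᵥ u₃ = 0) (h₂₃ : u₂ ⬝ᵥ u₃ = 0)
    (lamMax : ℝ)
    (hmax₁ : ∃ w : Fin 3 → ℝ, w ⬝ᵥ w = 1 ∧ M.mulVec w = lamMax • w)
    (hmax₂ : ∀ (w : Fin 3 → ℝ) (μ : ℝ), w ≠ 0 → M.mulVec w = μ • w → μ ≤ lamMax) :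
    DeltaM M u₁ v + DeltaM M u₂ v + DeltaM M u₃ v = 2 * (M.trace - 2 * lam) ∧
    (2 / 3 : ℝ) * (M.trace - 2 * lamMax) ≤
      max (max (DeltaM M u₁ v) (DeltaM M u₂ v)) (DeltaM M u₃ v) := by
  set A : Matrix (Fin 3) (Fin 3) ℝ := M * (1 - (2 : ℝ) • vecMulVec v v) with hA
  -- trace of A
  have htrA : A.trace = M.trace - 2 * lam := by
    have h1 : (M * vecMulVec v v).trace = lam := by
      have : (M * vecMulVec v v).trace = v ⬝ᵥ M.mulVec v := by
        simp [Matrix.trace, Matrix.diag, Matrix.mul_apply, vecMulVec_apply,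
          Fin.sum_univ_three, dotProduct, mulVec]
        ring
      rw [this, hev, dotProduct_smul, smul_eq_mul, hv, mul_one]
    rw [hA, Matrix.mul_sub, Matrix.mul_one, Matrix.mul_smul, Matrix.trace_sub,
      Matrix.trace_smul, smul_eq_mul, h1]
  have hsum : DeltaM M u₁ v + DeltaM M u₂ v + DeltaM M u₃ v = 2 * (M.trace - 2 * lam) := by
    rw [DeltaM_eq, DeltaM_eq, DeltaM_eq, h₁, h₂, h₃]
    have := quad_sum A u₁ u₂ u₃ h₁ h₂ h₃ h₁₂ h₁₃ h₂₃
    rw [← hA]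
    linarith [htrA]
  refine ⟨hsum, ?_⟩
  -- lam ≤ lamMax
  have hvne : v ≠ 0 := by
    intro h
    rw [h] at hv
    simp [dotProduct] at hv
  have hlam : lam ≤ lamMax := hmax₂ v lam hvne hev
  have h3 : (2 / 3 : ℝ) * (M.trace - 2 * lamMax) ≤
      (DeltaM M u₁ v + DeltaM M u₂ v + DeltaM M u₃ v) / 3 := by
    rw [hsum]; linarith
  have hle : (DeltaM M u₁ v + DeltaM M u₂ v + DeltaM M u₃ v) / 3 ≤
      max (max (DeltaM M u₁ v) (DeltaM M u₂ v)) (DeltaM M u₃ v) := by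
    have a1 : DeltaM M u₁ v ≤ max (max (DeltaM M u₁ v) (DeltaM M u₂ v)) (DeltaM M u₃ v) :=
      le_max_of_le_left (le_max_left _ _)
    have a2 : DeltaM M u₂ v ≤ max (max (DeltaM M u₁ v) (DeltaM M u₂ v)) (DeltaM M u₃ v) :=
      le_max_of_le_left (le_max_right _ _)
    have a3 : DeltaM M u₃ v ≤ max (max (DeltaM M u₁ v) (DeltaM M u₂ v)) (DeltaM M u₃ v) :=
      le_max_right _ _
    linarith
  linarith
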